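/- Let K be a field and U a nonempty subset of K[[t]], h ∈ ℕ ∪ {∞}, r ∈ ℕ. Let f = (fᵢ)_{i≥0} be an r-removed t-ordering of order h of U, with associated invariants αₖ^{h,{r}}(U, f) = min over (k−r)-element subsets A of {0,…,k−1} of Σ_{j∈A} min(h, v_t(fₖ − fⱼ)). Then the sequence (αₖ^{h,{r}}(U, f))_{k≥0} is nondecreasing. -/

import Mathlib

open PowerSeries in
/-- If `f` is an `r`-removed `t`-ordering of order `h` of a nonempty subset `U ⊆ K[[t]]`,
then the associated exponent sequence
`αₖ^{h,{r}} = min_{A ⊆ {0,…,k-1}, |A| = k-r} Σ_{j∈A} min(h, v_t(fₖ - fⱼ))`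
is nondecreasing. -/
theorem removed_order_t_ordering_exponents_monotone {K : Type*} [Field K]
    (U : Set (PowerSeries K)) (hU : U.Nonempty) (h : ℕ∞) (r : ℕ)
    (f : ℕ → PowerSeries K) (hf : ∀ i, f i ∈ U)
    (hord : ∀ k : ℕ, r < k →
      (⨅ A ∈ {A : Finset ℕ | A ⊆ Finset.range k ∧ A.card = k - r},
          ∑ j ∈ A, min h ((f k - f j).order)) =
        ⨅ g ∈ U, ⨅ A ∈ {A : Finset ℕ | A ⊆ Finset.range k ∧ A.card = k - r},
          ∑ j ∈ A, min h ((g - f j).order)) :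
    Monotone fun k =>
      ⨅ A ∈ {A : Finset ℕ | A ⊆ Finset.range k ∧ A.card = k - r},
        ∑ j ∈ A, min h ((f k - f j).order) := by
  apply monotone_nat_of_le_succ
  intro k
  rcases le_or_gt k r with hk | hk
  · -- for k ≤ r, the empty set gives value 0
    have h0 : (⨅ A ∈ {A : Finset ℕ | A ⊆ Finset.range k ∧ A.card = k - r},
        ∑ j ∈ A, min h ((f k - f j).order)) ≤ 0 := by
      have := iInf₂_le (f := fun (A : Finset ℕ) (_ : A ∈ {A : Finset ℕ |
          A ⊆ Finset.range k ∧ A.card = k - r}) => ∑ j ∈ A, min h ((f k - f j).order))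
        (∅ : Finset ℕ) ⟨Finset.empty_subset _, by simp [Nat.sub_eq_zero_of_le hk]⟩
      simpa using this
    exact le_trans h0 zero_le
  · rw [hord k hk]
    refine le_trans (iInf₂_le (f (k + 1)) (hf (k + 1))) ?_
    refine le_iInf₂ fun B hB => ?_
    obtain ⟨hBsub, hBcard⟩ := hB
    have hBne : B.Nonempty := by
      rw [← Finset.card_pos, hBcard]
      omega
    -- choose an element m of B to remove; prefer k if k ∈ B
    by_cases hkB : k ∈ B
    · have hsub : B.erase k ⊆ Finset.range k := by
        intro j hj
        have hj1 := Finset.mem_of_mem_erase hj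
        have hj2 := Finset.ne_of_mem_erase hj
        have := Finset.mem_range.mp (hBsub hj1)
        exact Finset.mem_range.mpr (by omega)
      have hcard : (B.erase k).card = k - r := by
        rw [Finset.card_erase_of_mem hkB, hBcard]
        omega
      refine le_trans (iInf₂_le (B.erase k) ⟨hsub, hcard⟩) ?_
      exact Finset.sum_le_sum_of_subset (Finset.erase_subset _ _)
    · obtain ⟨m, hm⟩ := hBne
      have hsub : B.erase m ⊆ Finset.range k := by
        intro j hj
        have hj1 := Finset.mem_of_mem_erase hj
        have := Finset.mem_range.mp (hBsub hj1)
        have hjk : j ≠ k := fun hjk => hkB (hjk ▸ hj1)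
        exact Finset.mem_range.mpr (by omega)
      have hcard : (B.erase m).card = k - r := by
        rw [Finset.card_erase_of_mem hm, hBcard]
        omega
      refine le_trans (iInf₂_le (B.erase m) ⟨hsub, hcard⟩) ?_
      exact Finset.sum_le_sum_of_subset (Finset.erase_subset _ _)
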